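/- Let p ≥ 1, A ∈ (0,∞], and let u : (0,A) → [0,∞) be measurable with all superlevel sets {u > s} of finite Lebesgue measure, and let u* denote its decreasing rearrangement on (0,A). Then ∫₀^A t^{p-1} u*(t) dt ≤ ∫₀^A t^{p-1} u(t) dt. -/

import Mathlib

open MeasureTheory
open scoped ENNReal

/-- The interval `(0, A)` for `A ∈ (0,∞]`, as a subset of `ℝ`. -/
def Iaa (A : ℝ≥0∞) : Set ℝ := {t : ℝ | 0 < t ∧ ENNReal.ofReal t < A}

lemma lemA (p : ℝ) (hp : 1 ≤ p) {b : ℝ} (hb : 0 ≤ b) {E : Set ℝ}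
    (hE : MeasurableSet E) (hE0 : E ⊆ Set.Ioi 0) (hvol : volume E = ENNReal.ofReal b) :
    ∫⁻ t in Set.Ioo 0 b, ENNReal.ofReal (t ^ (p - 1)) ≤
      ∫⁻ t in E, ENNReal.ofReal (t ^ (p - 1)) := by
  set g : ℝ → ℝ≥0∞ := fun t => ENNReal.ofReal (t ^ (p - 1)) with hg
  set I : Set ℝ := Set.Ioo 0 b with hI
  have hq : (0:ℝ) ≤ p - 1 := by linarith
  have hIvol : volume I = ENNReal.ofReal b := by
    rw [hI, Real.volume_Ioo, sub_zero]
  have hfinIE : volume (I ∩ E) ≠ ∞ := by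
    refine ne_of_lt (lt_of_le_of_lt (measure_mono Set.inter_subset_left) ?_)
    rw [hIvol]; exact ENNReal.ofReal_lt_top
  have hdiff : volume (I \ E) = volume (E \ I) := by
    have h1 : volume (I \ E) + volume (I ∩ E) = volume I := measure_diff_add_inter I hE
    have h2 : volume (E \ I) + volume (E ∩ I) = volume E :=
      measure_diff_add_inter E measurableSet_Ioo
    rw [Set.inter_comm] at h2
    have : volume (I \ E) + volume (I ∩ E) = volume (E \ I) + volume (I ∩ E) := by
      rw [h1, h2, hIvol, hvol]
    exact WithTop.add_right_cancel hfinIE this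
  have hsplitI : ∫⁻ t in I, g t = (∫⁻ t in I ∩ E, g t) + ∫⁻ t in I \ E, g t :=
    (lintegral_inter_add_diff g I hE).symm
  have hsplitE : ∫⁻ t in E, g t = (∫⁻ t in E ∩ I, g t) + ∫⁻ t in E \ I, g t :=
    (lintegral_inter_add_diff g E (measurableSet_Ioo : MeasurableSet I)).symm
  set C : ℝ≥0∞ := ENNReal.ofReal (b ^ (p - 1)) with hC
  have hup : ∫⁻ t in I \ E, g t ≤ C * volume (I \ E) := by
    have : ∫⁻ t in I \ E, g t ≤ ∫⁻ _ in I \ E, C := by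
      refine setLIntegral_mono' (measurableSet_Ioo.diff hE) fun t ht => ?_
      exact ENNReal.ofReal_le_ofReal
        (Real.rpow_le_rpow (le_of_lt ht.1.1) (le_of_lt ht.1.2) hq)
    simpa [setLIntegral_const] using this
  have hlow : C * volume (E \ I) ≤ ∫⁻ t in E \ I, g t := by
    have : ∫⁻ _ in E \ I, C ≤ ∫⁻ t in E \ I, g t := by
      refine setLIntegral_mono' (hE.diff measurableSet_Ioo) fun t ht => ?_
      have ht0 : 0 < t := hE0 ht.1
      have hbt : b ≤ t := by
        by_contra h
        exact ht.2 ⟨ht0, lt_of_not_ge h⟩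
      exact ENNReal.ofReal_le_ofReal (Real.rpow_le_rpow hb hbt hq)
    simpa [setLIntegral_const] using this
  calc ∫⁻ t in I, g t = (∫⁻ t in I ∩ E, g t) + ∫⁻ t in I \ E, g t := hsplitI
    _ ≤ (∫⁻ t in I ∩ E, g t) + C * volume (I \ E) := add_le_add le_rfl hup
    _ = (∫⁻ t in E ∩ I, g t) + C * volume (E \ I) := by rw [Set.inter_comm, hdiff]
    _ ≤ (∫⁻ t in E ∩ I, g t) + ∫⁻ t in E \ I, g t := add_le_add le_rfl hlow
    _ = ∫⁻ t in E, g t := hsplitE.symm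

theorem stmt_5 (p : ℝ) (hp : 1 ≤ p) (A : ℝ≥0∞) (hA : 0 < A)
    (u v : ℝ → ℝ) (hum : Measurable u) (hupos : ∀ t ∈ Iaa A, 0 ≤ u t)
    (hfin : ∀ s > (0:ℝ), volume (Iaa A ∩ {t | s < u t}) < ⊤)
    -- `v` is the decreasing rearrangement `u*` of `u`: it is nonnegative, decreasing
    -- on `(0,A)` and equimeasurable with `u`
    (hv : AntitoneOn v (Iaa A)) (hvpos : ∀ t ∈ Iaa A, 0 ≤ v t)
    (hequi : ∀ s > (0:ℝ), volume (Iaa A ∩ {t | s < u t}) = volume (Iaa A ∩ {t | s < v t})) :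
    ∫⁻ t in Iaa A, ENNReal.ofReal (t ^ (p - 1) * v t) ≤
      ∫⁻ t in Iaa A, ENNReal.ofReal (t ^ (p - 1) * u t) := by
  set S : Set ℝ := Iaa A with hSdef
  have hq : (0:ℝ) ≤ p - 1 := by linarith
  set g : ℝ → ℝ≥0∞ := fun t => ENNReal.ofReal (t ^ (p - 1)) with hgdef
  have hgm : Measurable g := (Real.continuous_rpow_const hq).measurable.ennreal_ofReal
  have hSeq : S = Set.Ioi 0 ∩ (fun t : ℝ => ENNReal.ofReal t) ⁻¹' Set.Iio A := by
    ext t; simp [hSdef, Iaa, and_comm]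
  have hS : MeasurableSet S := by
    rw [hSeq]
    exact measurableSet_Ioi.inter (ENNReal.measurable_ofReal measurableSet_Iio)
  have hSsub : S ⊆ Set.Ioi 0 := fun t ht => ht.1
  have hSdown : ∀ t ∈ S, ∀ t' : ℝ, 0 < t' → t' ≤ t → t' ∈ S := by
    intro t ht t' h0 h1
    exact ⟨h0, lt_of_le_of_lt (ENNReal.ofReal_le_ofReal h1) ht.2⟩
  set ν : Measure ℝ := (volume.restrict S).withDensity g with hν
  have hνS : ν Sᶜ = 0 := by
    refine withDensity_absolutelyContinuous (volume.restrict S) g ?_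
    rw [Measure.restrict_apply hS.compl]
    simp
  have hνmono : ∀ X : Set ℝ, ν X = ν (X ∩ S) := by
    intro X
    refine le_antisymm ?_ (measure_mono Set.inter_subset_left)
    calc ν X ≤ ν (X ∩ S) + ν (X \ S) := measure_le_inter_add_diff ν X S
      _ ≤ ν (X ∩ S) + ν Sᶜ := by
          exact add_le_add le_rfl (measure_mono (fun t ht => ht.2))
      _ = ν (X ∩ S) := by rw [hνS, add_zero]
  -- layer cake representation
  have key : ∀ w : ℝ → ℝ, (∀ t ∈ S, 0 ≤ w t) → AEMeasurable w (volume.restrict S) →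
      ∫⁻ t in S, ENNReal.ofReal (t ^ (p - 1) * w t) =
        ∫⁻ s in Set.Ioi 0, ν {t | s < w t} := by
    intro w hw0 hwm
    have h1 : ∫⁻ t in S, ENNReal.ofReal (t ^ (p - 1) * w t) =
        ∫⁻ t in S, g t * ENNReal.ofReal (w t) := by
      refine setLIntegral_congr_fun hS (fun t ht => ?_)
      rw [ENNReal.ofReal_mul (Real.rpow_nonneg (le_of_lt ht.1) _)]
    have h2 : ∫⁻ t, ENNReal.ofReal (w t) ∂ν =
        ∫⁻ t in S, g t * ENNReal.ofReal (w t) := by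
      rw [hν, lintegral_withDensity_eq_lintegral_mul₀ hgm.aemeasurable hwm.ennreal_ofReal]
      rfl
    have hwνm : AEMeasurable w ν :=
      hwm.mono' (withDensity_absolutelyContinuous (volume.restrict S) g)
    have hwνnn : 0 ≤ᵐ[ν] w := by
      rw [Filter.EventuallyLE, ae_iff]
      refine measure_mono_null ?_ hνS
      intro t ht
      simp only [Set.mem_setOf_eq, not_le] at ht ⊢
      intro htS
      exact absurd (hw0 t htS) (not_le.mpr ht)
    rw [h1, ← h2, lintegral_eq_lintegral_meas_lt ν hwνnn hwνm]
  have hkv := key v hvpos (aemeasurable_restrict_of_antitoneOn hS hv)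
  have hku := key u hupos hum.aemeasurable.restrict
  rw [hkv, hku]
  -- compare the two layer cake integrals pointwise in s > 0
  refine lintegral_mono_ae ((ae_restrict_iff' measurableSet_Ioi).2
    (Filter.Eventually.of_forall fun s hs => ?_))
  have hs : (0:ℝ) < s := hs
  set F : Set ℝ := S ∩ {t | s < v t} with hF
  set E : Set ℝ := S ∩ {t | s < u t} with hE
  have hEm : MeasurableSet E := hS.inter (measurableSet_lt measurable_const hum)
  have hEfin : volume E < ⊤ := hfin s hs
  have hFE : volume E = volume F := hequi s hs
  have hFdown : ∀ t ∈ F, ∀ t' : ℝ, 0 < t' → t' ≤ t → t' ∈ F := by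
    intro t ht t' h0 h1
    have ht'S : t' ∈ S := hSdown t ht.1 t' h0 h1
    exact ⟨ht'S, lt_of_lt_of_le ht.2 (hv ht'S ht.1 h1)⟩
  have hνv : ν {t | s < v t} = ν F := by
    rw [hνmono {t | s < v t}, Set.inter_comm]
  have hνu : ν {t | s < u t} = ν E := by
    rw [hνmono {t | s < u t}, Set.inter_comm]
  rw [hνv, hνu]
  -- compute ν E
  have hνEeq : ν E = ∫⁻ t in E, g t := by
    rw [hν, withDensity_apply _ hEm, Measure.restrict_restrict hEm,
      Set.inter_eq_left.mpr (Set.inter_subset_left)]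
  -- F is an interval (0, b] or (0, b)
  rcases Set.eq_empty_or_nonempty F with hFe | hFne
  · rw [hFe]; simp
  have hFbdd : BddAbove F := by
    by_contra hb
    have : Set.Ioi 0 ⊆ F := by
      intro x hx
      obtain ⟨t, htF, hxt⟩ := not_bddAbove_iff.mp hb x
      exact hFdown t htF x hx (le_of_lt hxt)
    have h1 : volume F = ⊤ := by
      refine top_le_iff.mp ?_
      calc (⊤:ℝ≥0∞) = volume (Set.Ioi (0:ℝ)) := by simp
        _ ≤ volume F := measure_mono this
    rw [← hFE] at h1
    exact absurd h1 (ne_of_lt hEfin)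
  set b : ℝ := sSup F with hb
  have hb0 : 0 ≤ b := le_csSup hFbdd hFne.choose_spec |>.trans' (le_of_lt (hFne.choose_spec.1.1))
  have hIooF : Set.Ioo 0 b ⊆ F := by
    intro x hx
    obtain ⟨t, htF, hxt⟩ := exists_lt_of_lt_csSup hFne hx.2
    exact hFdown t htF x hx.1 (le_of_lt hxt)
  have hFIoc : F ⊆ Set.Ioc 0 b := fun t ht => ⟨ht.1.1, le_csSup hFbdd ht⟩
  have hvolF : volume F = ENNReal.ofReal b := by
    refine le_antisymm ?_ ?_
    · calc volume F ≤ volume (Set.Ioc 0 b) := measure_mono hFIoc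
        _ = ENNReal.ofReal b := by rw [Real.volume_Ioc, sub_zero]
    · calc ENNReal.ofReal b = volume (Set.Ioo 0 b) := by rw [Real.volume_Ioo, sub_zero]
        _ ≤ volume F := measure_mono hIooF
  have hFae : (F : Set ℝ) =ᵐ[volume] Set.Ioo 0 b := by
    rw [MeasureTheory.ae_eq_set]
    constructor
    · refine measure_mono_null (fun t ht => ?_) (Real.volume_singleton (a := b))
      rcases hFIoc ht.1 with ⟨h1, h2⟩
      have : ¬ t < b := fun h => ht.2 ⟨h1, h⟩
      simp [le_antisymm h2 (not_lt.mp this)]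
    · have : Set.Ioo 0 b \ F = ∅ := Set.diff_eq_empty.mpr hIooF
      rw [this]; simp
  have hνF : ν F = ∫⁻ t in Set.Ioo 0 b, g t := by
    have h1 : ν F = ν (Set.Ioo 0 b) :=
      measure_congr ((withDensity_absolutelyContinuous (volume.restrict S) g).ae_eq
        ((Measure.absolutelyContinuous_of_le Measure.restrict_le_self).ae_eq hFae))
    have hIooS : Set.Ioo 0 b ⊆ S := hIooF.trans Set.inter_subset_left
    rw [h1, hν, withDensity_apply _ measurableSet_Ioo,
      Measure.restrict_restrict measurableSet_Ioo, Set.inter_eq_left.mpr hIooS]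
  rw [hνF, hνEeq]
  exact lemA p hp hb0 hEm (fun t ht => ht.1.1) (hFE.trans hvolF)
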